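/- Let R be a commutative ring, M an R-module, x ∈ M with x ≠ 0, and let 𝔭 be a prime ideal that is minimal among the prime ideals containing Ann_R(x). Then 𝔭 is Krull-associated to M. In particular every weakly associated prime of M is Krull-associated to M. -/

import Mathlib

section Defs

variable (A L : Type*) [CommRing A] [AddCommGroup L] [Module A L]

/-- `a ∈ A` is a zero divisor for the module `L`:
`a • y = 0` for some `y ≠ 0` in `L`. -/
def IsZeroDivisorFor (a : A) : Prop := ∃ y : L, y ≠ 0 ∧ a • y = 0

/-- `a ∈ A` is nilpotent for the module `L`: for every `y ∈ L` there is `n`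
with `a ^ n • y = 0`. -/
def IsNilpotentFor (a : A) : Prop := ∀ y : L, ∃ n : ℕ, a ^ n • y = 0

/-- `L` is `q`-coprimary: `L ≠ 0`, every zero divisor for `L` lies in `q`,
and every element of `q` is nilpotent for `L`. -/
def IsCoprimaryFor (q : Ideal A) : Prop :=
  (∃ y : L, y ≠ 0) ∧ (∀ a : A, IsZeroDivisorFor A L a → a ∈ q) ∧
    ∀ a ∈ q, IsNilpotentFor A L a

/-- A submodule `N` of `L` is `q`-primary in `L` iff `L ⧸ N` is `q`-coprimary. -/
def IsPrimaryIn (N : Submodule A L) (q : Ideal A) : Prop :=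
  IsCoprimaryFor A (L ⧸ N) q

/-- The `S`-component of `N` in `L`: `{x ∈ L | ∃ s ∈ S, s • x ∈ N}`,
for an arbitrary subset `S ⊆ A`. -/
def sComp (S : Set A) (N : Submodule A L) : Set L := {x : L | ∃ s ∈ S, s • x ∈ N}

/-- A prime ideal `p` is Krull-associated to `L` iff for every multiplicatively
closed subset `T ⊋ A ∖ p` one has `T^L((0)) ⊋ (A ∖ p)^L((0))`. -/
def KrullAssociated (p : Ideal A) : Prop :=
  ∀ T : Submonoid A, ((p : Set A)ᶜ ⊂ (T : Set A)) →
    sComp A L ((p : Set A)ᶜ) ⊥ ⊂ sComp A L (T : Set A) ⊥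

end Defs

lemma key_aux {R : Type*} [CommRing R] {I 𝔭 : Ideal R} (hmin : 𝔭 ∈ I.minimalPrimes)
    {t : R} (ht : t ∈ 𝔭) : ∃ (n : ℕ) (s : R), s ∉ 𝔭 ∧ s * t ^ n ∈ I := by
  have hp : 𝔭.IsPrime := hmin.1.1
  set S : Submonoid R := Submonoid.closure (insert t ((𝔭 : Set R)ᶜ)) with hS
  have hnd : ¬ Disjoint (I : Set R) (S : Set R) := by
    intro hdis
    obtain ⟨p, hpr, hIp, hdp⟩ := Ideal.exists_le_prime_disjoint I S hdis
    have hsub : (insert t ((𝔭 : Set R)ᶜ)) ⊆ (S : Set R) := Submonoid.subset_closure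
    have hp𝔭 : p ≤ 𝔭 := by
      intro a ha
      by_contra h
      exact Set.disjoint_left.mp hdp ha (hsub (Set.mem_insert_of_mem _ h))
    have := hmin.2 ⟨hpr, hIp⟩ hp𝔭
    exact Set.disjoint_left.mp hdp (this ht) (hsub (Set.mem_insert _ _))
  obtain ⟨a, haI, haS⟩ := Set.not_disjoint_iff.mp hnd
  have : ∃ (n : ℕ) (s : R), s ∉ 𝔭 ∧ a = s * t ^ n := by
    refine Submonoid.closure_induction (motive := fun a _ => ∃ (n : ℕ) (s : R), s ∉ 𝔭 ∧ a = s * t ^ n)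
      (fun y hy => ?_) ⟨0, 1, hp.ne_top ∘ (𝔭.eq_top_of_isUnit_mem · isUnit_one), by simp⟩
      (fun y z _ _ ⟨n, s, hs, hy⟩ ⟨m, u, hu, hz⟩ =>
        ⟨n + m, s * u, fun h => ((hp.mem_or_mem h).elim hs hu), by rw [hy, hz]; ring⟩) haS
    rcases hy with rfl | hy
    · exact ⟨1, 1, hp.ne_top ∘ (𝔭.eq_top_of_isUnit_mem · isUnit_one), by simp⟩
    · exact ⟨0, y, hy, by simp⟩
  obtain ⟨n, s, hs, rfl⟩ := this
  exact ⟨n, s, hs, haI⟩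

/-- if `x ≠ 0` and `𝔭` is minimal among the primes containing
`Ann_R(x)`, then `𝔭` is Krull-associated to `M`; in particular every weakly
associated prime of `M` is Krull-associated to `M`. -/
theorem statement11 {R M : Type*} [CommRing R] [AddCommGroup M] [Module R M]
    (𝔭 : Ideal R) (x : M) (hx : x ≠ 0)
    (hmin : 𝔭 ∈ (Ideal.torsionOf R M x).minimalPrimes) :
    KrullAssociated R M 𝔭 := by
  intro T hT
  have hp : 𝔭.IsPrime := hmin.1.1
  obtain ⟨t, htT, ht⟩ := Set.exists_of_ssubset hT
  rw [Set.notMem_compl_iff] at ht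
  obtain ⟨n, s, hs, hst⟩ := key_aux hmin (SetLike.mem_coe.mp ht)
  constructor
  · rintro y ⟨u, hu, huy⟩
    exact ⟨u, hT.le hu, huy⟩
  · intro hsub
    have hy : s • x ∈ sComp R M (T : Set R) ⊥ :=
      ⟨t ^ n, pow_mem htT n, by
        rw [Submodule.mem_bot, smul_smul, mul_comm, ← Ideal.mem_torsionOf_iff x]
        exact hst⟩
    obtain ⟨u, hu, huy⟩ := hsub hy
    rw [Set.mem_compl_iff, SetLike.mem_coe] at hu
    rw [Submodule.mem_bot, smul_smul] at huy
    have : u * s ∈ 𝔭 := hmin.1.2 ((Ideal.mem_torsionOf_iff x (u * s)).mpr huy)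
    exact (hp.mem_or_mem this).elim hu hs
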